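/- Let f be a multiplicative arithmetic function with rational values such that f(m) ≠ 0 for every positive integer m, let n ≥ 1 be an integer, and let a_1, …, a_n and b_1, …, b_n be positive integers. If gcd(a_i, a_j) = gcd(b_i, b_j) for all 1 ≤ i < j ≤ n, then (∏_{i=1}^{n} f(a_i)) / f(lcm(a_1,…,a_n)) = (∏_{i=1}^{n} f(b_i)) / f(lcm(b_1,…,b_n)). -/

import Mathlib

private lemma gcd_lcm_distrib' (k m n : ℕ) (hk : 0 < k) (hm : 0 < m) (hn : 0 < n) :
    Nat.gcd k (Nat.lcm m n) = Nat.lcm (Nat.gcd k m) (Nat.gcd k n) := by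
  have hk' := hk.ne'
  have hm' := hm.ne'
  have hn' := hn.ne'
  have hl : Nat.lcm m n ≠ 0 := Nat.lcm_ne_zero hm' hn'
  have h1 : Nat.gcd k m ≠ 0 := (Nat.gcd_pos_of_pos_left m hk).ne'
  have h2 : Nat.gcd k n ≠ 0 := (Nat.gcd_pos_of_pos_left n hk).ne'
  apply Nat.eq_of_factorization_eq ((Nat.gcd_pos_of_pos_left _ hk).ne')
    (Nat.lcm_ne_zero h1 h2)
  intro p
  rw [Nat.factorization_gcd hk' hl, Nat.factorization_lcm hm' hn',
    Nat.factorization_lcm h1 h2, Nat.factorization_gcd hk' hm',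
    Nat.factorization_gcd hk' hn']
  simp only [Finsupp.inf_apply, Finsupp.sup_apply]
  omega

private lemma gcd_finset_lcm {ι : Type*} [DecidableEq ι] (s : Finset ι) (k : ℕ) (hk : 0 < k)
    (a : ι → ℕ) (ha : ∀ i ∈ s, 0 < a i) :
    Nat.gcd k (s.lcm a) = s.lcm (fun i => Nat.gcd k (a i)) := by
  induction s using Finset.induction_on with
  | empty => simp [Nat.gcd_one_right]
  | insert x s' hx ih =>
    rw [Finset.lcm_insert, Finset.lcm_insert]
    have hpos : ∀ i ∈ s', 0 < a i := fun i hi => ha i (Finset.mem_insert_of_mem hi)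
    have hlcm : 0 < s'.lcm a := by
      rcases Nat.eq_zero_or_pos (s'.lcm a) with h | h
      · rw [Finset.lcm_eq_zero_iff] at h
        obtain ⟨i, hi, hi0⟩ := h
        · exact ((hpos i hi).ne' hi0).elim
      · exact h
    have : (lcm (a x) (s'.lcm a) : ℕ) = Nat.lcm (a x) (s'.lcm a) := rfl
    rw [this, gcd_lcm_distrib' k _ _ hk (ha x (Finset.mem_insert_self x s')) hlcm,
      ih hpos]
    rfl

private lemma f_gcd_mul_f_lcm (f : ℕ → ℚ) (hf1 : f 1 = 1)
    (hfmul : ∀ m n : ℕ, 0 < m → 0 < n → Nat.Coprime m n → f (m * n) = f m * f n)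
    (m n : ℕ) (hm : 0 < m) (hn : 0 < n) :
    f (Nat.gcd m n) * f (Nat.lcm m n) = f m * f n := by
  set g : ArithmeticFunction ℚ := ⟨fun k => if k = 0 then 0 else f k, by simp⟩ with hg
  have hgk : ∀ k : ℕ, 0 < k → g k = f k := by
    intro k hk
    simp [hg, ArithmeticFunction.coe_mk, hk.ne']
  have hmult : g.IsMultiplicative := by
    constructor
    · simpa [hg, ArithmeticFunction.coe_mk] using hf1
    · intro x y hxy
      rcases Nat.eq_zero_or_pos x with hx | hx
      · subst hx; simp [hg, ArithmeticFunction.coe_mk]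
      rcases Nat.eq_zero_or_pos y with hy | hy
      · subst hy; simp [hg, ArithmeticFunction.coe_mk]
      rw [hgk _ (Nat.mul_pos hx hy), hgk _ hx, hgk _ hy]
      exact hfmul x y hx hy hxy
  have := hmult.lcm_apply_mul_gcd_apply (x := m) (y := n)
  rw [hgk _ (Nat.lcm_pos hm hn), hgk _ (Nat.gcd_pos_of_pos_left _ hm),
    hgk _ hm, hgk _ hn] at this
  linarith [this]

private lemma key_lemma {ι : Type*} [DecidableEq ι] (f : ℕ → ℚ) (hf1 : f 1 = 1)
    (hfmul : ∀ m n : ℕ, 0 < m → 0 < n → Nat.Coprime m n → f (m * n) = f m * f n)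
    (hfne : ∀ m : ℕ, 0 < m → f m ≠ 0)
    (s : Finset ι) (a b : ι → ℕ)
    (ha : ∀ i ∈ s, 0 < a i) (hb : ∀ i ∈ s, 0 < b i)
    (hg : ∀ i ∈ s, ∀ j ∈ s, i ≠ j → Nat.gcd (a i) (a j) = Nat.gcd (b i) (b j)) :
    (∏ i ∈ s, f (a i)) * f (s.lcm b) = (∏ i ∈ s, f (b i)) * f (s.lcm a) := by
  induction s using Finset.induction_on with
  | empty => simp
  | insert x s' hx ih =>
    have ha' : ∀ i ∈ s', 0 < a i := fun i hi => ha i (Finset.mem_insert_of_mem hi)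
    have hb' : ∀ i ∈ s', 0 < b i := fun i hi => hb i (Finset.mem_insert_of_mem hi)
    have hax : 0 < a x := ha x (Finset.mem_insert_self x s')
    have hbx : 0 < b x := hb x (Finset.mem_insert_self x s')
    have hLa : 0 < s'.lcm a := by
      rcases Nat.eq_zero_or_pos (s'.lcm a) with h | h
      · rw [Finset.lcm_eq_zero_iff] at h
        obtain ⟨i, hi, hi0⟩ := h
        exact ((ha' i hi).ne' hi0).elim
      · exact h
    have hLb : 0 < s'.lcm b := by
      rcases Nat.eq_zero_or_pos (s'.lcm b) with h | h
      · rw [Finset.lcm_eq_zero_iff] at h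
        obtain ⟨i, hi, hi0⟩ := h
        exact ((hb' i hi).ne' hi0).elim
      · exact h
    have hgab : Nat.gcd (a x) (s'.lcm a) = Nat.gcd (b x) (s'.lcm b) := by
      rw [gcd_finset_lcm s' (a x) hax a ha', gcd_finset_lcm s' (b x) hbx b hb']
      refine Finset.lcm_congr rfl fun i hi => ?_
      exact hg x (Finset.mem_insert_self x s') i (Finset.mem_insert_of_mem hi)
        (fun h => hx (h ▸ hi))
    have hA := f_gcd_mul_f_lcm f hf1 hfmul (a x) (s'.lcm a) hax hLa
    have hB := f_gcd_mul_f_lcm f hf1 hfmul (b x) (s'.lcm b) hbx hLb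
    have hIH := ih ha' hb' (fun i hi j hj hij =>
      hg i (Finset.mem_insert_of_mem hi) j (Finset.mem_insert_of_mem hj) hij)
    rw [Finset.prod_insert hx, Finset.prod_insert hx, Finset.lcm_insert, Finset.lcm_insert]
    have e1 : (lcm (a x) (s'.lcm a) : ℕ) = Nat.lcm (a x) (s'.lcm a) := rfl
    have e2 : (lcm (b x) (s'.lcm b) : ℕ) = Nat.lcm (b x) (s'.lcm b) := rfl
    rw [e1, e2]
    have hgpos : 0 < Nat.gcd (a x) (s'.lcm a) := Nat.gcd_pos_of_pos_left _ hax
    have hLane := hfne _ hLa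
    have hLbne := hfne _ hLb
    have hgne := hfne _ hgpos
    rw [hgab] at hA
    apply mul_right_cancel₀ (b := f (s'.lcm a) * f (s'.lcm b) *
      f (Nat.gcd (b x) (s'.lcm b)))
      (mul_ne_zero (mul_ne_zero hLane hLbne) (hgab ▸ hgne))
    linear_combination (∏ i ∈ s', f (a i)) * f (s'.lcm b) *
        f (Nat.lcm (b x) (s'.lcm b)) * f (Nat.gcd (b x) (s'.lcm b)) * hA.symm +
      (f (Nat.gcd (b x) (s'.lcm b)))^2 * f (Nat.lcm (a x) (s'.lcm a)) *
        f (Nat.lcm (b x) (s'.lcm b)) * hIH -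
      (∏ i ∈ s', f (b i)) * f (s'.lcm a) *
        f (Nat.lcm (a x) (s'.lcm a)) * f (Nat.gcd (b x) (s'.lcm b)) * hB.symm

/-- Lemma 2.3: if `f` is a multiplicative arithmetic function, nonvanishing on
positive integers, and `gcd (a i) (a j) = gcd (b i) (b j)` for all `i < j`,
then `(∏ f (a i)) / f (lcm a i) = (∏ f (b i)) / f (lcm b i)`. -/
theorem multiplicative_ratio_eq_of_pairwise_gcd_eq (f : ℕ → ℚ)
    (hf1 : f 1 = 1)
    (hfmul : ∀ m n : ℕ, 0 < m → 0 < n → Nat.Coprime m n → f (m * n) = f m * f n)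
    (hfne : ∀ m : ℕ, 0 < m → f m ≠ 0)
    (n : ℕ) (hn : 1 ≤ n) (a b : Fin n → ℕ)
    (ha : ∀ i, 0 < a i) (hb : ∀ i, 0 < b i)
    (hgcd : ∀ i j : Fin n, i < j → Nat.gcd (a i) (a j) = Nat.gcd (b i) (b j)) :
    (∏ i, f (a i)) / f (Finset.univ.lcm a) =
      (∏ i, f (b i)) / f (Finset.univ.lcm b) := by
  have hLa : 0 < Finset.univ.lcm a := by
    rcases Nat.eq_zero_or_pos (Finset.univ.lcm a) with h | h
    · rw [Finset.lcm_eq_zero_iff] at h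
      obtain ⟨i, _, hi0⟩ := h
      exact ((ha i).ne' hi0).elim
    · exact h
  have hLb : 0 < Finset.univ.lcm b := by
    rcases Nat.eq_zero_or_pos (Finset.univ.lcm b) with h | h
    · rw [Finset.lcm_eq_zero_iff] at h
      obtain ⟨i, _, hi0⟩ := h
      exact ((hb i).ne' hi0).elim
    · exact h
  rw [div_eq_div_iff (hfne _ hLa) (hfne _ hLb)]
  exact key_lemma f hf1 hfmul hfne Finset.univ a b (fun i _ => ha i) (fun i _ => hb i)
    (fun i _ j _ hij => by
      rcases lt_or_gt_of_ne hij with h | h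
      · exact hgcd i j h
      · rw [Nat.gcd_comm (a i), Nat.gcd_comm (b i)]
        exact hgcd j i h)
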